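/- For every constant κ > 0, there exists a joint distribution of four random variables (A, B, C, D) on finite sets such that I(C:D) > I(C:D|A) + I(C:D|B) + I(A:B) + κ·(I(A:B|C) + H(C|A,B)). -/

import Mathlib

open scoped BigOperators Classical

noncomputable section

/-- `p` is a probability mass function on the finite type `Ω`. -/
def IsPMF {Ω : Type*} [Fintype Ω] (p : Ω → ℝ) : Prop :=
  (∀ ω, 0 ≤ p ω) ∧ ∑ ω, p ω = 1

/-- Probability of the event `X = s` under `p`. -/
def prOf {Ω S : Type*} [Fintype Ω] [DecidableEq S] (p : Ω → ℝ) (X : Ω → S) (s : S) : ℝ :=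
  ∑ ω ∈ Finset.univ.filter (fun ω => X ω = s), p ω

/-- Shannon entropy (in bits) of the random variable `X` under the pmf `p`. -/
def ent {Ω S : Type*} [Fintype Ω] [Fintype S] [DecidableEq S] (p : Ω → ℝ) (X : Ω → S) : ℝ :=
  - ∑ s : S, prOf p X s * Real.logb 2 (prOf p X s)

/-- Mutual information `I(X:Y) = H(X) + H(Y) - H(X,Y)`. -/
def mi {Ω S T : Type*} [Fintype Ω] [Fintype S] [Fintype T] [DecidableEq S] [DecidableEq T]
    (p : Ω → ℝ) (X : Ω → S) (Y : Ω → T) : ℝ :=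
  ent p X + ent p Y - ent p (fun ω => (X ω, Y ω))

/-- Conditional mutual information `I(X:Y|Z) = H(X,Z) + H(Y,Z) - H(X,Y,Z) - H(Z)`. -/
def cmi {Ω S T U : Type*} [Fintype Ω] [Fintype S] [Fintype T] [Fintype U]
    [DecidableEq S] [DecidableEq T] [DecidableEq U]
    (p : Ω → ℝ) (X : Ω → S) (Y : Ω → T) (Z : Ω → U) : ℝ :=
  ent p (fun ω => (X ω, Z ω)) + ent p (fun ω => (Y ω, Z ω))
    - ent p (fun ω => (X ω, Y ω, Z ω)) - ent p Z

/-- Conditional entropy `H(X|Y) = H(X,Y) - H(Y)`. -/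
def condEnt {Ω S T : Type*} [Fintype Ω] [Fintype S] [Fintype T] [DecidableEq S] [DecidableEq T]
    (p : Ω → ℝ) (X : Ω → S) (Y : Ω → T) : ℝ :=
  ent p (fun ω => (X ω, Y ω)) - ent p Y

/-- The four coordinate random variables on `Bool × Bool × Bool × Bool`. -/
def vA : Bool × Bool × Bool × Bool → Bool := fun ω => ω.1
def vB : Bool × Bool × Bool × Bool → Bool := fun ω => ω.2.1
def vC : Bool × Bool × Bool × Bool → Bool := fun ω => ω.2.2.1
def vD : Bool × Bool × Bool × Bool → Bool := fun ω => ω.2.2.2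

/-- The witness distribution. -/
def pfun (ε : ℝ) : Bool × Bool × Bool × Bool → ℝ := fun ω =>
  if ω = (true,true,false,false) then 1/2-ε else if ω = (false,false,true,true) then 1/2-ε
  else if ω = (false,true,true,false) then ε else if ω = (true,false,true,false) then ε else 0

lemma prOf_pfun {S : Type*} [DecidableEq S] (ε : ℝ) (X : Bool×Bool×Bool×Bool → S) (s : S) :
    prOf (pfun ε) X s
    = (if X (true,true,false,false) = s then 1/2-ε else 0)
      + (if X (false,false,true,true) = s then 1/2-ε else 0)
      + (if X (false,true,true,false) = s then ε else 0)
      + (if X (true,false,true,false) = s then ε else 0) := by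
  rw [prOf, Finset.sum_filter]
  simp only [pfun, Fintype.sum_prod_type, Fintype.sum_bool]
  norm_num
  ring

lemma logb_half : Real.logb 2 (1/2) = -1 := by
  rw [one_div, Real.logb_inv, Real.logb_self_eq_one] <;> norm_num

lemma logb_twoeps {ε : ℝ} (hε : 0 < ε) : Real.logb 2 (2*ε) = 1 + Real.logb 2 ε := by
  rw [Real.logb_mul (by norm_num) (ne_of_gt hε), Real.logb_self_eq_one] <;> norm_num

/-- The key analytic estimate. -/
lemma key_est {ε : ℝ} (hε0 : 0 < ε) (hε8 : ε < 1/8) :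
    1 + ((1/2-ε) * Real.logb 2 (1/2-ε) + (1/2+ε) * Real.logb 2 (1/2+ε)) < 8*ε^2 := by
  have hL : (0.6931471803 : ℝ) < Real.log 2 := Real.log_two_gt_d9
  have hL0 : 0 < Real.log 2 := by linarith
  have h1 : (0:ℝ) < 1 - 2*ε := by linarith
  have h2 : (0:ℝ) < 1 + 2*ε := by linarith
  have e1 : Real.logb 2 (1/2-ε) = (Real.log (1-2*ε) - Real.log 2) / Real.log 2 := by
    rw [Real.logb, show (1/2-ε : ℝ) = (1-2*ε)/2 by ring, Real.log_div (ne_of_gt h1) (by norm_num)]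
  have e2 : Real.logb 2 (1/2+ε) = (Real.log (1+2*ε) - Real.log 2) / Real.log 2 := by
    rw [Real.logb, show (1/2+ε : ℝ) = (1+2*ε)/2 by ring, Real.log_div (ne_of_gt h2) (by norm_num)]
  set u := Real.log (1-2*ε) with hu
  set v := Real.log (1+2*ε) with hv
  have hb1 : v ≤ 2*ε := by
    have := Real.log_le_sub_one_of_pos h2; linarith
  have hu0 : u ≤ -(2*ε) := by
    have := Real.log_le_sub_one_of_pos h1; linarith
  have hb2 : u + v ≤ -(4*ε^2) := by
    have huv : u + v = Real.log (1-4*ε^2) := by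
      rw [hu, hv, ← Real.log_mul (ne_of_gt h1) (ne_of_gt h2)]; ring_nf
    have h3 : (0:ℝ) < 1 - 4*ε^2 := by nlinarith
    have := Real.log_le_sub_one_of_pos h3
    rw [huv]; linarith
  have hb3 : -(1-2*ε) * u ≤ 2*ε := by
    have hi : (0:ℝ) < (1-2*ε)⁻¹ := by positivity
    have h6 := Real.log_le_sub_one_of_pos hi
    rw [Real.log_inv] at h6
    have h4 : (1-2*ε) * (-u) ≤ (1-2*ε) * ((1-2*ε)⁻¹ - 1) :=
      mul_le_mul_of_nonneg_left (by linarith) (le_of_lt h1)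
    have h5 : (1-2*ε) * ((1-2*ε)⁻¹ - 1) = 2*ε := by field_simp; ring
    nlinarith
  have hm : -u ≤ 8*ε/3 := by nlinarith
  have hεu : ε*(-u) ≤ ε*(8*ε/3) := mul_le_mul_of_nonneg_left hm hε0.le
  have hεv : ε*v ≤ ε*(2*ε) := mul_le_mul_of_nonneg_left hb1 hε0.le
  have hε2 : 0 < ε^2 := by positivity
  have goal2 : (1/2-ε)*u + (1/2+ε)*v < 8*ε^2 * Real.log 2 := by nlinarith
  have hexp : (1/2-ε) * ((u - Real.log 2)/Real.log 2) + (1/2+ε) * ((v - Real.log 2)/Real.log 2)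
      = ((1/2-ε)*u + (1/2+ε)*v) / Real.log 2 - 1 := by
    field_simp; ring
  rw [e1, e2, hexp]
  have hdiv : ((1/2-ε)*u + (1/2+ε)*v) / Real.log 2 < 8*ε^2 := by
    rw [div_lt_iff₀ hL0]; exact goal2
  linarith

theorem new_ineq_essentially_conditional (κ : ℝ) (hκ : 0 < κ) :
    ∃ p : Bool × Bool × Bool × Bool → ℝ, IsPMF p ∧
      cmi p vC vD vA + cmi p vC vD vB + mi p vA vB
          + κ * (cmi p vA vB vC + condEnt p vC (fun ω => (vA ω, vB ω)))
        < mi p vC vD := by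
  obtain ⟨ε, hε0, hε8, hεκ⟩ : ∃ ε : ℝ, 0 < ε ∧ ε < 1/8 ∧ (2+κ)*(4*ε) = 1 := by
    refine ⟨1/(4*(2+κ)), by positivity, ?_, by field_simp⟩
    rw [div_lt_div_iff₀ (by positivity) (by norm_num)]
    linarith
  refine ⟨pfun ε, ⟨?_, ?_⟩, ?_⟩
  · intro ω
    simp only [pfun]
    split_ifs <;> linarith
  · simp only [pfun, Fintype.sum_prod_type, Fintype.sum_bool]
    norm_num
  · set lb := Real.logb 2 with hlb
    have hA : ent (pfun ε) vA = 1 := by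
      rw [ent]; simp only [Fintype.sum_prod_type, Fintype.sum_bool, prOf_pfun, vA, vB, vC, vD]
      norm_num [logb_half]
    have hB : ent (pfun ε) vB = 1 := by
      rw [ent]; simp only [Fintype.sum_prod_type, Fintype.sum_bool, prOf_pfun, vA, vB, vC, vD]
      norm_num [logb_half]
    have hC : ent (pfun ε) vC = -((1/2-ε)*lb (1/2-ε) + (1/2+ε)*lb (1/2+ε)) := by
      rw [ent]; simp only [Fintype.sum_prod_type, Fintype.sum_bool, prOf_pfun, vA, vB, vC, vD]
      norm_num
      rw [hlb]
      try ring_nf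
    have hD : ent (pfun ε) vD = -((1/2-ε)*lb (1/2-ε) + (1/2+ε)*lb (1/2+ε)) := by
      rw [ent]; simp only [Fintype.sum_prod_type, Fintype.sum_bool, prOf_pfun, vA, vB, vC, vD]
      norm_num
      rw [hlb]
      try ring_nf
    have hCD : ent (pfun ε) (fun ω => (vC ω, vD ω))
        = -(2*((1/2-ε)*lb (1/2-ε)) + (2*ε)*lb (2*ε)) := by
      rw [ent]; simp only [Fintype.sum_prod_type, Fintype.sum_bool, prOf_pfun, vA, vB, vC, vD]
      norm_num
      rw [hlb]
      try ring_nf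
    have hCA : ent (pfun ε) (fun ω => (vC ω, vA ω))
        = 1/2 - ((1/2-ε)*lb (1/2-ε) + ε*lb ε) := by
      rw [ent]; simp only [Fintype.sum_prod_type, Fintype.sum_bool, prOf_pfun, vA, vB, vC, vD]
      norm_num [logb_half]
      rw [hlb]
      try ring_nf
    have hDA : ent (pfun ε) (fun ω => (vD ω, vA ω))
        = 1/2 - ((1/2-ε)*lb (1/2-ε) + ε*lb ε) := by
      rw [ent]; simp only [Fintype.sum_prod_type, Fintype.sum_bool, prOf_pfun, vA, vB, vC, vD]
      norm_num [logb_half]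
      rw [hlb]
      try ring_nf
    have hCB : ent (pfun ε) (fun ω => (vC ω, vB ω))
        = 1/2 - ((1/2-ε)*lb (1/2-ε) + ε*lb ε) := by
      rw [ent]; simp only [Fintype.sum_prod_type, Fintype.sum_bool, prOf_pfun, vA, vB, vC, vD]
      norm_num [logb_half]
      rw [hlb]
      try ring_nf
    have hDB : ent (pfun ε) (fun ω => (vD ω, vB ω))
        = 1/2 - ((1/2-ε)*lb (1/2-ε) + ε*lb ε) := by
      rw [ent]; simp only [Fintype.sum_prod_type, Fintype.sum_bool, prOf_pfun, vA, vB, vC, vD]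
      norm_num [logb_half]
      rw [hlb]
      try ring_nf
    have hAC : ent (pfun ε) (fun ω => (vA ω, vC ω))
        = 1/2 - ((1/2-ε)*lb (1/2-ε) + ε*lb ε) := by
      rw [ent]; simp only [Fintype.sum_prod_type, Fintype.sum_bool, prOf_pfun, vA, vB, vC, vD]
      norm_num [logb_half]
      rw [hlb]
      try ring_nf
    have hBC : ent (pfun ε) (fun ω => (vB ω, vC ω))
        = 1/2 - ((1/2-ε)*lb (1/2-ε) + ε*lb ε) := by
      rw [ent]; simp only [Fintype.sum_prod_type, Fintype.sum_bool, prOf_pfun, vA, vB, vC, vD]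
      norm_num [logb_half]
      rw [hlb]
      try ring_nf
    have hCDA : ent (pfun ε) (fun ω => (vC ω, vD ω, vA ω))
        = -(2*((1/2-ε)*lb (1/2-ε)) + 2*(ε*lb ε)) := by
      rw [ent]; simp only [Fintype.sum_prod_type, Fintype.sum_bool, prOf_pfun, vA, vB, vC, vD]
      norm_num
      rw [hlb]
      try ring_nf
    have hCDB : ent (pfun ε) (fun ω => (vC ω, vD ω, vB ω))
        = -(2*((1/2-ε)*lb (1/2-ε)) + 2*(ε*lb ε)) := by
      rw [ent]; simp only [Fintype.sum_prod_type, Fintype.sum_bool, prOf_pfun, vA, vB, vC, vD]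
      norm_num
      rw [hlb]
      try ring_nf
    have hAB : ent (pfun ε) (fun ω => (vA ω, vB ω))
        = -(2*((1/2-ε)*lb (1/2-ε)) + 2*(ε*lb ε)) := by
      rw [ent]; simp only [Fintype.sum_prod_type, Fintype.sum_bool, prOf_pfun, vA, vB, vC, vD]
      norm_num
      rw [hlb]
      try ring_nf
    have hABC : ent (pfun ε) (fun ω => (vA ω, vB ω, vC ω))
        = -(2*((1/2-ε)*lb (1/2-ε)) + 2*(ε*lb ε)) := by
      rw [ent]; simp only [Fintype.sum_prod_type, Fintype.sum_bool, prOf_pfun, vA, vB, vC, vD]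
      norm_num
      rw [hlb]
      try ring_nf
    have hCAB : ent (pfun ε) (fun ω => (vC ω, vA ω, vB ω))
        = -(2*((1/2-ε)*lb (1/2-ε)) + 2*(ε*lb ε)) := by
      rw [ent]; simp only [Fintype.sum_prod_type, Fintype.sum_bool, prOf_pfun, vA, vB, vC, vD]
      norm_num
      rw [hlb]
      try ring_nf
    have hkey := key_est hε0 hε8
    have h2e : (2+κ)*(4*ε)*(2*ε) = 2*ε := by rw [hεκ]; ring
    have hmul : (2+κ) * (1 + ((1/2-ε)*lb (1/2-ε) + (1/2+ε)*lb (1/2+ε)))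
        < (2+κ) * (8*ε^2) :=
      mul_lt_mul_of_pos_left hkey (by linarith)
    have hlb2 : lb (2*ε) = 1 + lb ε := by rw [hlb]; exact logb_twoeps hε0
    rw [cmi, cmi, cmi, mi, mi, condEnt, hA, hB, hC, hD, hCD, hCA, hDA, hCB, hDB, hAC, hBC,
      hCDA, hCDB, hAB, hABC, hCAB, hlb2]
    linarith [hmul, h2e]


end
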